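/- For every doubling measure ω on ℝⁿ there exists a constant c_ω > 0 such that for every cube I the energy E(I,ω)² = (1/2) E_I^{ω} E_I^{ω} |x−x'|²/|I|^{2/n} ≥ c_ω; consequently, for ω doubling, the pivotal condition V(ω,σ)^p and the energy condition E(ω,σ)^p are equivalent. -/

import Mathlib

open MeasureTheory ENNReal

structure Cube (n : ℕ) where
  c : Fin n → ℝ
  r : ℝ
  hr : 0 < r

namespace Cube

def set {n : ℕ} (I : Cube n) : Set (Fin n → ℝ) :=
  {x | ∀ i, I.c i - I.r ≤ x i ∧ x i < I.c i + I.r}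

noncomputable def side {n : ℕ} (I : Cube n) : ℝ := 2 * I.r

noncomputable def vol {n : ℕ} (I : Cube n) : ℝ := (2 * I.r) ^ n

def double {n : ℕ} (I : Cube n) : Cube n := ⟨I.c, 2 * I.r, by have := I.hr; linarith⟩

def triple {n : ℕ} (I : Cube n) : Cube n := ⟨I.c, 3 * I.r, by have := I.hr; linarith⟩

end Cube

noncomputable def poisson {n : ℕ} (I : Cube n) (ω : Measure (Fin n → ℝ)) : ℝ≥0∞ :=
  ∫⁻ x, (ENNReal.ofReal (I.side / (I.side + Metric.infDist x I.set) ^ 2)) ^ n ∂ω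

noncomputable def maximal {n : ℕ} (μ : Measure (Fin n → ℝ)) (x : Fin n → ℝ) : ℝ≥0∞ :=
  ⨆ (I : Cube n) (_ : x ∈ I.set), μ I.set / ENNReal.ofReal I.vol

noncomputable def wMass {n : ℕ} (w : (Fin n → ℝ) → ℝ≥0∞) (E : Set (Fin n → ℝ)) : ℝ≥0∞ :=
  ∫⁻ x in E, w x


/-- The squared energy `E(I,ω)² = (1/2) 𝔼_I^ω 𝔼_I^ω |x-x'|²/|I|^{2/n}`. -/
noncomputable def energySq {n : ℕ} (I : Cube n) (ω : Measure (Fin n → ℝ)) : ℝ≥0∞ :=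
  (∫⁻ x in I.set, ∫⁻ y in I.set, ENNReal.ofReal (dist x y ^ 2 / I.side ^ 2) ∂ω ∂ω) /
    (2 * (ω I.set) ^ 2)

/-- The pivotal condition `V(ω,σ)^p < ∞`. -/
def PivotalCond {n : ℕ} (p : ℝ) (ω σ : Measure (Fin n → ℝ)) : Prop :=
  ∃ C > (0:ℝ), ∀ I₀ : Cube n, ∀ Ir : ℕ → Cube n,
    (Pairwise fun r s => Disjoint (Ir r).set (Ir s).set) →
    (⋃ r, (Ir r).set) = I₀.set →
    ∑' r, ω (Ir r).set * (poisson (Ir r) (σ.restrict I₀.set)) ^ p ≤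
      ENNReal.ofReal C * σ I₀.set

/-- The energy condition `E(ω,σ)^p < ∞`. -/
def EnergyCond {n : ℕ} (p : ℝ) (ω σ : Measure (Fin n → ℝ)) : Prop :=
  ∃ C > (0:ℝ), ∀ I₀ : Cube n, ∀ Ir : ℕ → Cube n,
    (Pairwise fun r s => Disjoint (Ir r).set (Ir s).set) →
    (⋃ r, (Ir r).set) = I₀.set →
    ∑' r, ω (Ir r).set * energySq (Ir r) ω * (poisson (Ir r) (σ.restrict I₀.set)) ^ p ≤
      ENNReal.ofReal C * σ I₀.set

section Aux

open Set

variable {n : ℕ}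

lemma cube_set_subset {I J : Cube n}
    (h : ∀ i : Fin n, J.c i - J.r ≤ I.c i - I.r ∧ I.c i + I.r ≤ J.c i + J.r) :
    I.set ⊆ J.set := by
  intro x hx i
  obtain ⟨h1, h2⟩ := hx i
  obtain ⟨g1, g2⟩ := h i
  exact ⟨by linarith, by linarith⟩

lemma cube_set_eq {I J : Cube n} (hc : I.c = J.c) (hr : I.r = J.r) : I.set = J.set := by
  simp only [Cube.set, hc, hr]

lemma cube_measure_ne_top (ω : MeasureTheory.Measure (Fin n → ℝ))
    [MeasureTheory.IsLocallyFiniteMeasure ω] (I : Cube n) : ω I.set ≠ ⊤ := by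
  have hsub : I.set ⊆ Metric.closedBall I.c I.r := by
    intro x hx
    rw [Metric.mem_closedBall]
    refine (dist_pi_le_iff I.hr.le).2 fun i => ?_
    obtain ⟨h1, h2⟩ := hx i
    rw [Real.dist_eq, abs_le]
    constructor <;> linarith
  exact ((measure_mono hsub).trans_lt
    (isCompact_closedBall I.c I.r).measure_lt_top).ne

lemma cube_measure_ne_zero (ω : MeasureTheory.Measure (Fin n → ℝ)) (hω : ω ≠ 0)
    {K : ℝ}
    (hdoubling : ∀ I : Cube n, ω I.double.set ≤ ENNReal.ofReal K * ω I.set)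
    (I : Cube n) : ω I.set ≠ 0 := by
  intro h0
  set D : ℕ → Cube n := fun k => ⟨I.c, 2 ^ k * I.r, by have := I.hr; positivity⟩ with hD
  have hnull : ∀ k, ω (D k).set = 0 := by
    intro k
    induction k with
    | zero =>
      have : (D 0).set = I.set := cube_set_eq rfl (by show (2:ℝ) ^ 0 * I.r = I.r; ring)
      rw [this]; exact h0
    | succ k ih =>
      have hset : (D (k + 1)).set = (D k).double.set :=
        cube_set_eq rfl (by show (2:ℝ) ^ (k+1) * I.r = 2 * (2 ^ k * I.r); ring)
      rw [hset]
      have := hdoubling (D k)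
      rw [ih, mul_zero] at this
      exact le_antisymm this zero_le
  have huniv : (Set.univ : Set (Fin n → ℝ)) ⊆ ⋃ k, (D k).set := by
    intro x _
    obtain ⟨k, hk⟩ := pow_unbounded_of_one_lt (dist x I.c / I.r) (one_lt_two (α := ℝ))
    rw [div_lt_iff₀ I.hr] at hk
    refine Set.mem_iUnion.2 ⟨k, fun i => ?_⟩
    have h1 : dist (x i) (I.c i) ≤ dist x I.c := dist_le_pi_dist x I.c i
    rw [Real.dist_eq] at h1
    have h2 : |x i - I.c i| < 2 ^ k * I.r := lt_of_le_of_lt h1 hk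
    obtain ⟨h3, h4⟩ := abs_lt.mp h2
    exact ⟨by show I.c i - 2 ^ k * I.r ≤ x i; linarith,
      by show x i < I.c i + 2 ^ k * I.r; linarith⟩
  have : ω Set.univ = 0 :=
    measure_mono_null huniv (MeasureTheory.measure_iUnion_null hnull)
  exact hω (MeasureTheory.Measure.measure_univ_eq_zero.mp this)

lemma energySq_le_one (ω : MeasureTheory.Measure (Fin n → ℝ)) (I : Cube n) :
    energySq I ω ≤ 1 := by
  have hside : (0:ℝ) < I.side := by have := I.hr; simp [Cube.side]; linarith
  have hbound : ∀ x ∈ I.set, ∀ y ∈ I.set,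
      ENNReal.ofReal (dist x y ^ 2 / I.side ^ 2) ≤ 1 := by
    intro x hx y hy
    rw [show (1:ENNReal) = ENNReal.ofReal 1 by simp]
    apply ENNReal.ofReal_le_ofReal
    have hd : dist x y ≤ I.side := by
      refine (dist_pi_le_iff hside.le).2 fun i => ?_
      obtain ⟨h1, h2⟩ := hx i
      obtain ⟨h3, h4⟩ := hy i
      rw [Real.dist_eq, abs_le]
      simp only [Cube.side]
      constructor <;> linarith
    rw [div_le_one (by positivity)]
    nlinarith [dist_nonneg (x := x) (y := y)]
  have hA : (∫⁻ x in I.set, ∫⁻ y in I.set,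
      ENNReal.ofReal (dist x y ^ 2 / I.side ^ 2) ∂ω ∂ω) ≤ ω I.set * ω I.set := by
    calc (∫⁻ x in I.set, ∫⁻ y in I.set,
        ENNReal.ofReal (dist x y ^ 2 / I.side ^ 2) ∂ω ∂ω)
        ≤ ∫⁻ _x in I.set, ω I.set ∂ω := by
          refine MeasureTheory.setLIntegral_mono measurable_const fun x hx => ?_
          calc (∫⁻ y in I.set, ENNReal.ofReal (dist x y ^ 2 / I.side ^ 2) ∂ω)
              ≤ ∫⁻ _y in I.set, 1 ∂ω :=
                MeasureTheory.setLIntegral_mono measurable_const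
                  fun y hy => hbound x hx y hy
            _ = ω I.set := by simp [MeasureTheory.setLIntegral_const]
      _ = ω I.set * ω I.set := by simp [MeasureTheory.setLIntegral_const]
  refine le_trans (ENNReal.div_le_of_le_mul ?_) (by norm_num : (2:ENNReal)⁻¹ ≤ 1)
  calc (∫⁻ x in I.set, ∫⁻ y in I.set,
      ENNReal.ofReal (dist x y ^ 2 / I.side ^ 2) ∂ω ∂ω)
      ≤ ω I.set * ω I.set := hA
    _ = 2⁻¹ * (2 * ω I.set ^ 2) := by
        rw [← mul_assoc, ENNReal.inv_mul_cancel two_ne_zero ENNReal.ofNat_ne_top,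
          one_mul, sq]

end Aux

lemma energySq_lower {n : ℕ} (hn : 0 < n)
    (ω : MeasureTheory.Measure (Fin n → ℝ)) [MeasureTheory.IsLocallyFiniteMeasure ω]
    (hω : ω ≠ 0) {K : ℝ} (hK : 0 < K)
    (hdoubling : ∀ I : Cube n, ω I.double.set ≤ ENNReal.ofReal K * ω I.set)
    (I : Cube n) : ENNReal.ofReal (1 / (32 * K ^ 6)) ≤ energySq I ω := by
  have hr := I.hr
  set J₁ : Cube n := ⟨fun i => I.c i - I.r / 2, I.r / 4, by linarith⟩ with hJ₁def
  set J₂ : Cube n := ⟨fun i => I.c i + I.r / 2, I.r / 4, by linarith⟩ with hJ₂def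
  have hJ₁I : J₁.set ⊆ I.set := cube_set_subset fun i =>
    ⟨by show I.c i - I.r ≤ (I.c i - I.r / 2) - I.r / 4; linarith,
     by show (I.c i - I.r / 2) + I.r / 4 ≤ I.c i + I.r; linarith⟩
  have hJ₂I : J₂.set ⊆ I.set := cube_set_subset fun i =>
    ⟨by show I.c i - I.r ≤ (I.c i + I.r / 2) - I.r / 4; linarith,
     by show (I.c i + I.r / 2) + I.r / 4 ≤ I.c i + I.r; linarith⟩
  have hchain : ∀ J : Cube n, I.set ⊆ J.double.double.double.set →
      ω I.set ≤ ENNReal.ofReal (K ^ 3) * ω J.set := by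
    intro J hsub
    calc ω I.set ≤ ω J.double.double.double.set := measure_mono hsub
      _ ≤ ENNReal.ofReal K * ω J.double.double.set := hdoubling _
      _ ≤ ENNReal.ofReal K * (ENNReal.ofReal K * ω J.double.set) :=
          mul_le_mul' le_rfl (hdoubling _)
      _ ≤ ENNReal.ofReal K * (ENNReal.ofReal K * (ENNReal.ofReal K * ω J.set)) :=
          mul_le_mul' le_rfl (mul_le_mul' le_rfl (hdoubling _))
      _ = ENNReal.ofReal (K ^ 3) * ω J.set := by
          rw [← mul_assoc, ← mul_assoc, ← ENNReal.ofReal_mul hK.le,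
            ← ENNReal.ofReal_mul (by positivity)]
          congr 2
          ring
  have hω₁ : ω I.set ≤ ENNReal.ofReal (K ^ 3) * ω J₁.set := by
    refine hchain J₁ (cube_set_subset fun i => ?_)
    constructor
    · show (I.c i - I.r / 2) - 2 * (2 * (2 * (I.r / 4))) ≤ I.c i - I.r
      linarith
    · show I.c i + I.r ≤ (I.c i - I.r / 2) + 2 * (2 * (2 * (I.r / 4)))
      linarith
  have hω₂ : ω I.set ≤ ENNReal.ofReal (K ^ 3) * ω J₂.set := by
    refine hchain J₂ (cube_set_subset fun i => ?_)
    constructor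
    · show (I.c i + I.r / 2) - 2 * (2 * (2 * (I.r / 4))) ≤ I.c i - I.r
      linarith
    · show I.c i + I.r ≤ (I.c i + I.r / 2) + 2 * (2 * (2 * (I.r / 4)))
      linarith
  -- measurability of the inner integral as a function of x
  have hfun : Measurable (Function.uncurry fun x y : Fin n → ℝ =>
      ENNReal.ofReal (dist x y ^ 2 / I.side ^ 2)) := by
    apply Measurable.ennreal_ofReal
    fun_prop
  have hmeas : Measurable (fun x : Fin n → ℝ =>
      ∫⁻ y in J₂.set, ENNReal.ofReal (dist x y ^ 2 / I.side ^ 2) ∂ω) :=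
    hfun.lintegral_prod_right'
  -- pointwise lower bound on the two corner cubes
  have hpt : ∀ x ∈ J₁.set, ∀ y ∈ J₂.set,
      ENNReal.ofReal (1 / 16 : ℝ) ≤ ENNReal.ofReal (dist x y ^ 2 / I.side ^ 2) := by
    intro x hx y hy
    apply ENNReal.ofReal_le_ofReal
    set i0 : Fin n := ⟨0, hn⟩
    have h1 : x i0 < (I.c i0 - I.r / 2) + I.r / 4 := (hx i0).2
    have h2 : (I.c i0 + I.r / 2) - I.r / 4 ≤ y i0 := (hy i0).1
    have hd : I.r / 2 ≤ dist x y := by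
      have hpi : dist (x i0) (y i0) ≤ dist x y := dist_le_pi_dist x y i0
      rw [Real.dist_eq] at hpi
      calc I.r / 2 ≤ y i0 - x i0 := by linarith
        _ ≤ |x i0 - y i0| := by rw [abs_sub_comm]; exact le_abs_self _
        _ ≤ dist x y := hpi
    have hside : I.side = 2 * I.r := rfl
    rw [le_div_iff₀ (by rw [hside]; positivity)]
    rw [hside]
    nlinarith [dist_nonneg (x := x) (y := y)]
  -- lower bound on the double integral
  have hA : ENNReal.ofReal (1 / 16) * (ω J₁.set * ω J₂.set) ≤
      ∫⁻ x in I.set, ∫⁻ y in I.set,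
        ENNReal.ofReal (dist x y ^ 2 / I.side ^ 2) ∂ω ∂ω := by
    calc ENNReal.ofReal (1 / 16) * (ω J₁.set * ω J₂.set)
        = ∫⁻ _x in J₁.set, ENNReal.ofReal (1 / 16) * ω J₂.set ∂ω := by
          rw [MeasureTheory.setLIntegral_const]; ring
      _ ≤ ∫⁻ x in J₁.set, ∫⁻ y in J₂.set,
            ENNReal.ofReal (dist x y ^ 2 / I.side ^ 2) ∂ω ∂ω := by
          refine MeasureTheory.setLIntegral_mono hmeas fun x hx => ?_
          calc ENNReal.ofReal (1 / 16) * ω J₂.set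
              = ∫⁻ _y in J₂.set, ENNReal.ofReal (1 / 16 : ℝ) ∂ω := by
                rw [MeasureTheory.setLIntegral_const]
            _ ≤ ∫⁻ y in J₂.set, ENNReal.ofReal (dist x y ^ 2 / I.side ^ 2) ∂ω := by
                refine MeasureTheory.setLIntegral_mono ?_ (hpt x hx)
                apply Measurable.ennreal_ofReal
                fun_prop
      _ ≤ ∫⁻ x in J₁.set, ∫⁻ y in I.set,
            ENNReal.ofReal (dist x y ^ 2 / I.side ^ 2) ∂ω ∂ω :=
          MeasureTheory.lintegral_mono fun x =>
            MeasureTheory.lintegral_mono_set hJ₂I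
      _ ≤ ∫⁻ x in I.set, ∫⁻ y in I.set,
            ENNReal.ofReal (dist x y ^ 2 / I.side ^ 2) ∂ω ∂ω :=
          MeasureTheory.lintegral_mono_set hJ₁I
  -- put things together
  have h0 : ω I.set ≠ 0 := cube_measure_ne_zero ω hω hdoubling I
  have htop : ω I.set ≠ ⊤ := cube_measure_ne_top ω I
  have hden0 : 2 * ω I.set ^ 2 ≠ 0 :=
    mul_ne_zero two_ne_zero (pow_ne_zero _ h0)
  have hdent : 2 * ω I.set ^ 2 ≠ ⊤ :=
    ENNReal.mul_ne_top ENNReal.ofNat_ne_top (ENNReal.pow_ne_top htop)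
  unfold energySq
  rw [ENNReal.le_div_iff_mul_le (Or.inl hden0) (Or.inl hdent)]
  have h2e : (2 : ENNReal) = ENNReal.ofReal 2 := by simp
  have hcomb : ENNReal.ofReal (1 / (32 * K ^ 6) * 2) *
      (ENNReal.ofReal (K ^ 3) * ENNReal.ofReal (K ^ 3)) = ENNReal.ofReal (1 / 16) := by
    rw [← ENNReal.ofReal_mul (by positivity), ← ENNReal.ofReal_mul (by positivity)]
    congr 1
    field_simp
    ring
  calc ENNReal.ofReal (1 / (32 * K ^ 6)) * (2 * ω I.set ^ 2)
      = ENNReal.ofReal (1 / (32 * K ^ 6) * 2) * (ω I.set * ω I.set) := by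
        rw [sq, h2e, ← mul_assoc, ← ENNReal.ofReal_mul (by positivity)]
    _ ≤ ENNReal.ofReal (1 / (32 * K ^ 6) * 2) *
          ((ENNReal.ofReal (K ^ 3) * ω J₁.set) * (ENNReal.ofReal (K ^ 3) * ω J₂.set)) :=
        mul_le_mul' le_rfl (mul_le_mul' hω₁ hω₂)
    _ = ENNReal.ofReal (1 / (32 * K ^ 6) * 2) *
          (ENNReal.ofReal (K ^ 3) * ENNReal.ofReal (K ^ 3)) * (ω J₁.set * ω J₂.set) := by
        ring
    _ = ENNReal.ofReal (1 / 16) * (ω J₁.set * ω J₂.set) := by rw [hcomb]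
    _ ≤ _ := hA

/-- For a (nonzero, locally finite) doubling measure `ω` the energy
`E(I,ω)²` is bounded below by a positive constant uniformly over all cubes; consequently,
for doubling `ω` the pivotal condition `V(ω,σ)^p` and the energy condition `E(ω,σ)^p`
are equivalent. -/
theorem stmt_14 (n : ℕ) (hn : 0 < n) (p : ℝ) (hp : 1 < p)
    (ω : Measure (Fin n → ℝ)) [IsLocallyFiniteMeasure ω] (hω : ω ≠ 0)
    (K : ℝ) (hK : 0 < K)
    (hdoubling : ∀ I : Cube n, ω I.double.set ≤ ENNReal.ofReal K * ω I.set) :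
    (∃ c > (0:ℝ), ∀ I : Cube n, ENNReal.ofReal c ≤ energySq I ω) ∧
    (∀ σ : Measure (Fin n → ℝ), (PivotalCond p ω σ ↔ EnergyCond p ω σ)) := by
  have hc : (0 : ℝ) < 1 / (32 * K ^ 6) := by positivity
  have hlow : ∀ I : Cube n, ENNReal.ofReal (1 / (32 * K ^ 6)) ≤ energySq I ω :=
    fun I => energySq_lower hn ω hω hK hdoubling I
  refine ⟨⟨1 / (32 * K ^ 6), hc, hlow⟩, fun σ => ⟨?_, ?_⟩⟩
  · rintro ⟨C, hC, h⟩
    refine ⟨C, hC, fun I₀ Ir hdis hcov => ?_⟩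
    refine le_trans (ENNReal.tsum_le_tsum fun r => ?_) (h I₀ Ir hdis hcov)
    calc ω (Ir r).set * energySq (Ir r) ω * poisson (Ir r) (σ.restrict I₀.set) ^ p
        ≤ ω (Ir r).set * 1 * poisson (Ir r) (σ.restrict I₀.set) ^ p :=
          mul_le_mul' (mul_le_mul' le_rfl (energySq_le_one ω _)) le_rfl
      _ = ω (Ir r).set * poisson (Ir r) (σ.restrict I₀.set) ^ p := by rw [mul_one]
  · rintro ⟨C, hC, h⟩
    refine ⟨C / (1 / (32 * K ^ 6)), by positivity, fun I₀ Ir hdis hcov => ?_⟩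
    have hkey : ENNReal.ofReal (1 / (32 * K ^ 6)) *
        ∑' r, ω (Ir r).set * poisson (Ir r) (σ.restrict I₀.set) ^ p ≤
        ENNReal.ofReal C * σ I₀.set := by
      rw [← ENNReal.tsum_mul_left]
      refine le_trans (ENNReal.tsum_le_tsum fun r => ?_) (h I₀ Ir hdis hcov)
      calc ENNReal.ofReal (1 / (32 * K ^ 6)) *
            (ω (Ir r).set * poisson (Ir r) (σ.restrict I₀.set) ^ p)
          = ω (Ir r).set * ENNReal.ofReal (1 / (32 * K ^ 6)) *
              poisson (Ir r) (σ.restrict I₀.set) ^ p := by ring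
        _ ≤ ω (Ir r).set * energySq (Ir r) ω *
              poisson (Ir r) (σ.restrict I₀.set) ^ p :=
            mul_le_mul' (mul_le_mul' le_rfl (hlow _)) le_rfl
    have hne : ENNReal.ofReal (1 / (32 * K ^ 6)) ≠ 0 := (ENNReal.ofReal_pos.2 hc).ne'
    calc ∑' r, ω (Ir r).set * poisson (Ir r) (σ.restrict I₀.set) ^ p
        = (ENNReal.ofReal (1 / (32 * K ^ 6)))⁻¹ *
            (ENNReal.ofReal (1 / (32 * K ^ 6)) *
              ∑' r, ω (Ir r).set * poisson (Ir r) (σ.restrict I₀.set) ^ p) := by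
          rw [← mul_assoc, ENNReal.inv_mul_cancel hne ENNReal.ofReal_ne_top, one_mul]
      _ ≤ (ENNReal.ofReal (1 / (32 * K ^ 6)))⁻¹ * (ENNReal.ofReal C * σ I₀.set) :=
          mul_le_mul' le_rfl hkey
      _ = ENNReal.ofReal (C / (1 / (32 * K ^ 6))) * σ I₀.set := by
          rw [ENNReal.ofReal_div_of_pos hc, ENNReal.div_eq_inv_mul, mul_assoc]
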